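/- Let ℓ ≥ 1 and let a_1 ≤ b_1 < a_2 ≤ b_2 < ... < a_ℓ ≤ b_ℓ be positive integers, so that the integer intervals [a_i, b_i] = {a_i, a_i+1, ..., b_i} are pairwise disjoint, and set X = [a_1,b_1] ∪ [a_2,b_2] ∪ ... ∪ [a_ℓ,b_ℓ]. Then for every positive integer n, the number of nonempty subsets A of X with gcd(A ∪ {n}) = 1 equals Σ_{d ∣ n} μ(d)·(2^{Σ_{i=1}^{ℓ} (⌊b_i/d⌋ − ⌊(a_i−1)/d⌋)} − 1). -/

import Mathlib

open Finset

private theorem moebius_indicator' (g n : ℕ) (hn : 0 < n) :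
    (if Nat.gcd g n = 1 then (1:ℤ) else 0)
      = ∑ d ∈ n.divisors, (ArithmeticFunction.moebius d) * (if d ∣ g then 1 else 0) := by
  have h1 : ∑ d ∈ n.divisors, (ArithmeticFunction.moebius d : ℤ) * (if d ∣ g then 1 else 0)
      = ∑ d ∈ (Nat.gcd g n).divisors, (ArithmeticFunction.moebius d : ℤ) := by
    rw [← Finset.sum_filter_add_sum_filter_not n.divisors (· ∣ g)]
    have h2 : ∑ d ∈ n.divisors.filter (¬ · ∣ g), (ArithmeticFunction.moebius d : ℤ) * (if d ∣ g then 1 else 0) = 0 := by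
      apply Finset.sum_eq_zero; intro d hd
      simp only [Finset.mem_filter] at hd
      simp [hd.2]
    rw [h2, add_zero]
    have h3 : n.divisors.filter (· ∣ g) = (Nat.gcd g n).divisors := by
      ext d
      simp only [Finset.mem_filter, Nat.mem_divisors, Nat.dvd_gcd_iff]
      constructor
      · rintro ⟨⟨h1, h2⟩, h3⟩; exact ⟨⟨h3, h1⟩, Nat.gcd_pos_of_pos_right g hn |>.ne'⟩
      · rintro ⟨⟨h1, h2⟩, _⟩; exact ⟨⟨h2, hn.ne'⟩, h1⟩
    rw [h3]
    apply Finset.sum_congr rfl; intro d hd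
    have : d ∣ g := (Nat.dvd_gcd_iff.mp (Nat.mem_divisors.mp hd).1).1
    simp [this]
  rw [h1]
  have := ArithmeticFunction.coe_mul_zeta_apply (f := (ArithmeticFunction.moebius : ArithmeticFunction ℤ)) (x := Nat.gcd g n)
  rw [ArithmeticFunction.moebius_mul_coe_zeta, ArithmeticFunction.one_apply] at this
  rw [this]

private theorem icc_filter_dvd_card' (a b d : ℕ) (ha : 0 < a) (hab : a ≤ b) :
    ((Finset.Icc a b).filter (d ∣ ·)).card = b / d - (a - 1) / d := by
  have h1 : Finset.Icc a b = Finset.Ioc (a - 1) b := by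
    rw [← Finset.Icc_add_one_left_eq_Ioc, Nat.sub_add_cancel (show 1 ≤ a by omega)]
  have h2 : Finset.Ioc 0 b = Finset.Ioc 0 (a-1) ∪ Finset.Ioc (a-1) b :=
    (Finset.Ioc_union_Ioc_eq_Ioc (Nat.zero_le _) (le_trans (Nat.sub_le a 1) hab)).symm
  have hdisj : Disjoint ((Finset.Ioc 0 (a-1)).filter (d ∣ ·)) ((Finset.Ioc (a-1) b).filter (d ∣ ·)) := by
    apply Finset.disjoint_filter_filter
    rw [Finset.disjoint_left]
    intro x hx hx'
    simp only [Finset.mem_Ioc] at hx hx'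
    omega
  have h3 : b / d = (a-1)/d + ((Finset.Ioc (a-1) b).filter (d ∣ ·)).card := by
    rw [← Nat.Ioc_filter_dvd_card_eq_div b d, ← Nat.Ioc_filter_dvd_card_eq_div (a-1) d,
      h2, Finset.filter_union, Finset.card_union_of_disjoint hdisj]
  rw [h1]; omega

private theorem card_nonempty_powerset' (s : Finset ℕ) :
    (s.powerset.filter (·.Nonempty)).card = 2 ^ s.card - 1 := by
  have h : s.powerset.filter (·.Nonempty) = s.powerset.erase ∅ := by
    ext A
    simp [Finset.nonempty_iff_ne_empty, and_comm]
  rw [h, Finset.card_erase_of_mem (Finset.empty_mem_powerset s), Finset.card_powerset]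

theorem card_relPrimeTo_subsets_union_intervals
    (ℓ : ℕ) (hℓ : 1 ≤ ℓ) (a b : ℕ → ℕ)
    (ha : ∀ i < ℓ, 0 < a i) (hab : ∀ i < ℓ, a i ≤ b i)
    (hord : ∀ i, i + 1 < ℓ → b i < a (i + 1))
    (n : ℕ) (hn : 0 < n) :
    ((((Finset.range ℓ).biUnion (fun i => Finset.Icc (a i) (b i))).powerset.filter
        (fun A => A.Nonempty ∧ Nat.gcd (A.gcd id) n = 1)).card : ℤ) =
    ∑ d ∈ n.divisors,
      ArithmeticFunction.moebius d *
        (2 ^ (∑ i ∈ Finset.range ℓ, (b i / d - (a i - 1) / d)) - 1) := by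
  classical
  set X := (Finset.range ℓ).biUnion (fun i => Finset.Icc (a i) (b i)) with hX
  -- monotonicity: i < j < ℓ implies b i < a j
  have hmono : ∀ i j, i < j → j < ℓ → b i < a j := by
    intro i j hij hjl
    induction j with
    | zero => omega
    | succ k ih =>
      rcases Nat.lt_succ_iff_lt_or_eq.mp hij with h | h
      · exact lt_of_lt_of_le (ih h (by omega)) (le_trans (hab k (by omega)) (le_of_lt (hord k hjl)))
      · subst h; exact hord i hjl
  -- set of A's
  set S := X.powerset.filter (·.Nonempty) with hS
  have hfilter : X.powerset.filter (fun A => A.Nonempty ∧ Nat.gcd (A.gcd id) n = 1)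
      = S.filter (fun A => Nat.gcd (A.gcd id) n = 1) := by
    rw [hS, Finset.filter_filter]
  rw [hfilter]
  have hcard : ((S.filter (fun A => Nat.gcd (A.gcd id) n = 1)).card : ℤ)
      = ∑ A ∈ S, (if Nat.gcd (A.gcd id) n = 1 then (1:ℤ) else 0) := by
    rw [Finset.sum_boole]
  rw [hcard]
  have hstep : ∀ A ∈ S, (if Nat.gcd (A.gcd id) n = 1 then (1:ℤ) else 0)
      = ∑ d ∈ n.divisors, (ArithmeticFunction.moebius d : ℤ) * (if d ∣ A.gcd id then 1 else 0) :=
    fun A _ => moebius_indicator' _ n hn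
  rw [Finset.sum_congr rfl hstep, Finset.sum_comm]
  apply Finset.sum_congr rfl
  intro d hd
  rw [← Finset.mul_sum, Finset.sum_boole]
  congr 1
  -- now: #(S.filter (d ∣ A.gcd id)) = 2^(Σ ...) - 1 in ℤ
  have hSd : S.filter (fun A => d ∣ A.gcd id)
      = (X.filter (d ∣ ·)).powerset.filter (·.Nonempty) := by
    ext A
    simp only [hS, Finset.mem_filter, Finset.mem_powerset, Finset.dvd_gcd_iff, id_eq]
    constructor
    · rintro ⟨⟨hAX, hAne⟩, hdvd⟩
      exact ⟨fun x hx => Finset.mem_filter.mpr ⟨hAX hx, hdvd x hx⟩, hAne⟩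
    · rintro ⟨hAf, hAne⟩
      exact ⟨⟨fun x hx => (Finset.mem_filter.mp (hAf hx)).1, hAne⟩,
        fun x hx => (Finset.mem_filter.mp (hAf hx)).2⟩
  rw [hSd, card_nonempty_powerset']
  have hm : (X.filter (d ∣ ·)).card = ∑ i ∈ Finset.range ℓ, (b i / d - (a i - 1) / d) := by
    rw [hX, Finset.filter_biUnion, Finset.card_biUnion]
    · exact Finset.sum_congr rfl fun i hi =>
        icc_filter_dvd_card' (a i) (b i) d (ha i (Finset.mem_range.mp hi)) (hab i (Finset.mem_range.mp hi))
    · intro i hi j hj hij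
      apply Finset.disjoint_filter_filter
      rw [Finset.disjoint_left]
      intro x hx hx'
      simp only [Finset.mem_Icc] at hx hx'
      rcases Nat.lt_or_ge i j with h | h
      · have := hmono i j h (Finset.mem_range.mp hj); omega
      · have := hmono j i (lt_of_le_of_ne h (Ne.symm hij)) (Finset.mem_range.mp hi); omega
  rw [hm]
  have h1 : 1 ≤ 2 ^ (∑ i ∈ Finset.range ℓ, (b i / d - (a i - 1) / d)) := Nat.one_le_two_pow
  push_cast [h1]
  ring
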